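/- Let z1 z2 z3 z4 be a quadrilateral whose diagonals have ratio at most e and meet at an angle at least 1/e (e ≥ 1), let z' be the intersection of the perpendicular bisectors of the two diagonals, and let h be an upper bound for twice the maximal side length of the quadrilateral (so each side has length ≤ h/2). Then |z' − (z2+z4)/2| ≤ C·e·h for an absolute constant C. -/

import Mathlib

open Complex

/-- Real inner product of two complex numbers viewed as vectors in ℝ². -/
def rdot (v w : ℂ) : ℝ := (v * (starRingEnd ℂ) w).re

lemma rdot_eq_inner (v w : ℂ) : rdot v w = inner ℝ v w := by
  rw [Complex.inner]
  simp [rdot, Complex.mul_re, mul_comm]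

lemma key_identity (va vb p q r s : ℝ) (hc : va * r + vb * s = 0) :
    (va * p + vb * q) ^ 2 * (r ^ 2 + s ^ 2) ^ 2
      = (va ^ 2 + vb ^ 2) * (r ^ 2 + s ^ 2) * (s * p - r * q) ^ 2 := by
  linear_combination ((va*r+vb*s)*((r*p+s*q)^2-(s*p-r*q)^2)
    - 2*(vb*r-va*s)*(s*p-r*q)*(r*p+s*q)) * hc

set_option maxHeartbeats 1000000 in
theorem stmt18 :
    ∃ C : ℝ, 0 < C ∧
      ∀ (e h : ℝ) (z1 z2 z3 z4 z' : ℂ), 1 ≤ e →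
        z1 ≠ z3 → z2 ≠ z4 →
        ‖z3 - z1‖ / ‖z4 - z2‖ ≤ e →
        ‖z4 - z2‖ / ‖z3 - z1‖ ≤ e →
        1 / e ≤ InnerProductGeometry.angle (z3 - z1) (z4 - z2) →
        InnerProductGeometry.angle (z3 - z1) (z4 - z2) ≤ Real.pi - 1 / e →
        rdot (z' - (z1 + z3) / 2) (z3 - z1) = 0 →
        rdot (z' - (z2 + z4) / 2) (z4 - z2) = 0 →
        ‖z2 - z1‖ ≤ h / 2 →
        ‖z3 - z2‖ ≤ h / 2 →
        ‖z4 - z3‖ ≤ h / 2 →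
        ‖z1 - z4‖ ≤ h / 2 →
        ‖z' - (z2 + z4) / 2‖ ≤ C * e * h := by
  refine ⟨1, one_pos, ?_⟩
  intro e h z1 z2 z3 z4 z' he h13 h24 _ _ hang1 hang2 hperp1 hperp2 hs12 hs23 hs34 hs41
  set θ := InnerProductGeometry.angle (z3 - z1) (z4 - z2) with hθ
  set d1 : ℂ := z3 - z1 with hd1def
  set d2 : ℂ := z4 - z2 with hd2def
  set v : ℂ := z' - (z2 + z4) / 2 with hvdef
  set m : ℂ := (z1 + z3) / 2 - (z2 + z4) / 2 with hmdef
  have he0 : (0:ℝ) < e := lt_of_lt_of_le one_pos he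
  have hd1 : d1 ≠ 0 := sub_ne_zero.mpr (Ne.symm h13)
  have hd2 : d2 ≠ 0 := sub_ne_zero.mpr (Ne.symm h24)
  have hd1pos : 0 < ‖d1‖ := by simpa using hd1
  have hd2pos : 0 < ‖d2‖ := by simpa using hd2
  have hh0 : 0 ≤ h := by
    have := norm_nonneg (z2 - z1); linarith
  -- |m| ≤ h / 2
  have hm : ‖m‖ ≤ h / 2 := by
    have : m = ((z1 - z2) + (z3 - z4)) / 2 := by rw [hmdef]; ring
    rw [this]
    have h1 : ‖z1 - z2‖ = ‖z2 - z1‖ := norm_sub_rev z1 z2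
    have h2 : ‖z3 - z4‖ = ‖z4 - z3‖ := norm_sub_rev z3 z4
    calc ‖((z1 - z2) + (z3 - z4)) / 2‖
        ≤ (‖z1 - z2‖ + ‖z3 - z4‖) / 2 := by
          rw [norm_div]
          simp only [Complex.norm_ofNat]
          gcongr
          exact norm_add_le _ _
      _ ≤ h / 2 := by rw [h1, h2]; linarith
  -- rdot v d1 = rdot m d1
  have hvd1 : rdot v d1 = rdot m d1 := by
    have hvm : z' - (z1 + z3) / 2 = v - m := by rw [hvdef, hmdef]; ring
    rw [hvm] at hperp1
    have : rdot (v - m) d1 = rdot v d1 - rdot m d1 := by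
      simp [rdot, sub_mul, Complex.sub_re]
    rw [this] at hperp1
    linarith
  -- key identity
  have hperp2' : v.re * d2.re + v.im * d2.im = 0 := by
    have : rdot v d2 = v.re * d2.re + v.im * d2.im := by
      simp [rdot, Complex.mul_re]
    rw [this] at hperp2; exact hperp2
  have hrdot1 : rdot v d1 = v.re * d1.re + v.im * d1.im := by
    simp [rdot, Complex.mul_re]
  have habs2 : ∀ w : ℂ, (‖w‖) ^ 2 = w.re ^ 2 + w.im ^ 2 := by
    intro w
    rw [Complex.sq_norm, Complex.normSq_apply]; ring
  have key : (rdot v d1) ^ 2 * ((‖d2‖) ^ 2) ^ 2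
      = (‖v‖) ^ 2 * ((‖d2‖) ^ 2) * (d2.im * d1.re - d2.re * d1.im) ^ 2 := by
    rw [hrdot1, habs2, habs2]
    exact key_identity v.re v.im d1.re d1.im d2.re d2.im hperp2'
  -- sine of the angle
  have hsinθ : Real.sin θ * (‖d1‖ * ‖d2‖)
      = |d2.im * d1.re - d2.re * d1.im| := by
    have := InnerProductGeometry.sin_angle_mul_norm_mul_norm d1 d2
    rw [← hθ] at this
    rw [this]
    have e1 : inner ℝ d1 d1 = (‖d1‖) ^ 2 := by
      rw [← rdot_eq_inner, rdot, habs2]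
      simp [Complex.mul_re]
      ring
    have e2 : inner ℝ d2 d2 = (‖d2‖) ^ 2 := by
      rw [← rdot_eq_inner, rdot, habs2]
      simp [Complex.mul_re]
      ring
    have e3 : inner ℝ d1 d2 = d1.re * d2.re + d1.im * d2.im := by
      rw [← rdot_eq_inner, rdot]
      simp [Complex.mul_re]
    rw [e1, e2, e3, habs2, habs2]
    rw [show (d1.re ^ 2 + d1.im ^ 2) * (d2.re ^ 2 + d2.im ^ 2)
        - (d1.re * d2.re + d1.im * d2.im) * (d1.re * d2.re + d1.im * d2.im)
        = (d2.im * d1.re - d2.re * d1.im) ^ 2 by ring]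
    exact Real.sqrt_sq_eq_abs _
  have hsin_nonneg : 0 ≤ Real.sin θ :=
    Real.sin_nonneg_of_nonneg_of_le_pi (InnerProductGeometry.angle_nonneg _ _)
      (InnerProductGeometry.angle_le_pi _ _)
  -- |rdot v d1| = |v| * |d1| * sin θ
  have habs_eq : |rdot v d1| = ‖v‖ * ‖d1‖ * Real.sin θ := by
    have hsq : (rdot v d1) ^ 2 = (‖v‖ * ‖d1‖ * Real.sin θ) ^ 2 := by
      have hd2sq : (0:ℝ) < (‖d2‖) ^ 2 := by positivity
      have expand : (‖v‖ * ‖d1‖ * Real.sin θ) ^ 2 * ((‖d2‖)^2)^2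
          = (‖v‖) ^ 2 * ((‖d2‖) ^ 2)
            * (Real.sin θ * (‖d1‖ * ‖d2‖)) ^ 2 := by ring
      have : (‖v‖ * ‖d1‖ * Real.sin θ) ^ 2 * ((‖d2‖)^2)^2
          = (‖v‖) ^ 2 * ((‖d2‖) ^ 2)
            * (d2.im * d1.re - d2.re * d1.im) ^ 2 := by
        rw [expand, hsinθ, _root_.sq_abs]
      have h2 := key.trans this.symm
      have := mul_right_cancel₀ (by positivity : ((‖d2‖)^2)^2 ≠ 0) h2
      exact this
    have h1 : 0 ≤ ‖v‖ * ‖d1‖ * Real.sin θ := by positivity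
    rw [← Real.sqrt_sq_eq_abs, hsq, Real.sqrt_sq h1]
  -- Cauchy-Schwarz on rdot m d1
  have hcs : |rdot m d1| ≤ ‖m‖ * ‖d1‖ := by
    rw [rdot_eq_inner]
    have := abs_real_inner_le_norm m d1
    simpa using this
  -- so |v| * sin θ ≤ h / 2
  have hmain : ‖v‖ * Real.sin θ ≤ h / 2 := by
    have h1 : ‖v‖ * ‖d1‖ * Real.sin θ ≤ ‖m‖ * ‖d1‖ := by
      rw [← habs_eq, hvd1]; exact hcs
    have h2 : ‖v‖ * Real.sin θ * ‖d1‖ ≤ (h / 2) * ‖d1‖ := by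
      calc ‖v‖ * Real.sin θ * ‖d1‖
          = ‖v‖ * ‖d1‖ * Real.sin θ := by ring
        _ ≤ ‖m‖ * ‖d1‖ := h1
        _ ≤ (h / 2) * ‖d1‖ := by gcongr
    exact le_of_mul_le_mul_right h2 hd1pos
  -- lower bound on sin θ
  have hpi : (0:ℝ) < Real.pi := Real.pi_pos
  have hinv : 0 < 1 / e := by positivity
  have hinv1 : 1 / e ≤ 1 := by
    rw [div_le_one he0]; exact he
  have hsin_lb : 2 / Real.pi * (1 / e) ≤ Real.sin θ := by
    rcases le_or_gt θ (Real.pi / 2) with hc | hc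
    · calc 2 / Real.pi * (1 / e) ≤ 2 / Real.pi * θ :=
            mul_le_mul_of_nonneg_left hang1 (by positivity)
        _ ≤ Real.sin θ := Real.mul_le_sin (le_trans (le_of_lt hinv) hang1) hc
    · rw [← Real.sin_pi_sub]
      have h1 : 1 / e ≤ Real.pi - θ := by linarith
      have h2 : Real.pi - θ ≤ Real.pi / 2 := by linarith
      calc 2 / Real.pi * (1 / e) ≤ 2 / Real.pi * (Real.pi - θ) :=
            mul_le_mul_of_nonneg_left h1 (by positivity)
        _ ≤ Real.sin (Real.pi - θ) := Real.mul_le_sin (by linarith) h2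
  -- finish
  have hfin : ‖v‖ * (2 / Real.pi * (1 / e)) ≤ h / 2 := by
    calc ‖v‖ * (2 / Real.pi * (1 / e))
        ≤ ‖v‖ * Real.sin θ :=
          mul_le_mul_of_nonneg_left hsin_lb (norm_nonneg _)
      _ ≤ h / 2 := hmain
  have hπ4 : Real.pi ≤ 4 := Real.pi_le_four
  have hvnn : 0 ≤ ‖v‖ := norm_nonneg _
  rw [one_mul]
  -- from hfin : |v| * (2/(π e)) ≤ h/2, get |v| ≤ π*e*h/4 ≤ e*h
  have h2pe : ‖v‖ * (2 / Real.pi * (1 / e)) = ‖v‖ * 2 / (Real.pi * e) := by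
    field_simp
  rw [h2pe] at hfin
  have hpe : 0 < Real.pi * e := by positivity
  rw [div_le_iff₀ hpe] at hfin
  -- |v| * 2 ≤ (h/2) * (π * e) ≤ 2 e h
  have hstep : h / 2 * (Real.pi * e) ≤ h / 2 * (4 * e) := by
    apply mul_le_mul_of_nonneg_left _ (by linarith)
    exact mul_le_mul_of_nonneg_right hπ4 (le_of_lt he0)
  linarith
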